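/- Let f : ℝ² → ℝ be continuous, α > 0, and for bounds a₁ < b₁, a₂ < b₂ define outer bounds A_i = a_i - α·(b_i-a_i)/2 and B_i = b_i + α·(b_i-a_i)/2 for i = 1,2, and the loss L(a₁,a₂,b₁,b₂) = ∫_{A₂}^{B₂} ∫_{A₁}^{B₁} f(u,v) du dv - 2·∫_{a₂}^{b₂} ∫_{a₁}^{b₁} f(u,v) du dv. Then ∂L/∂a₁ = -(1 + α/2)·∫_{A₂}^{B₂} f(A₁,v) dv - (α/2)·∫_{A₂}^{B₂} f(B₁,v) dv + 2·∫_{a₂}^{b₂} f(a₁,v) dv. -/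

import Mathlib

open MeasureTheory intervalIntegral

/-- Fubini for interval integrals of a continuous function. -/
lemma oir_swap_aux (f : ℝ → ℝ → ℝ) (hf : Continuous fun p : ℝ × ℝ => f p.1 p.2)
    (p q c d : ℝ) :
    (∫ v in c..d, ∫ u in p..q, f u v) = ∫ u in p..q, ∫ v in c..d, f u v := by
  have hcont : Continuous (Function.uncurry fun v u => f u v) :=
    hf.comp (continuous_snd.prodMk continuous_fst)
  have hint : Integrable (Function.uncurry fun v u => f u v)
      ((volume.restrict (Set.uIoc c d)).prod (volume.restrict (Set.uIoc p q))) := by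
    rw [Measure.prod_restrict]
    have h1 : IntegrableOn (Function.uncurry fun v u => f u v)
        ((Set.uIcc c d) ×ˢ (Set.uIcc p q)) volume :=
      hcont.continuousOn.integrableOn_compact (isCompact_uIcc.prod isCompact_uIcc)
    exact h1.mono_set (Set.prod_mono Set.uIoc_subset_uIcc Set.uIoc_subset_uIcc)
  simp only [intervalIntegral_eq_integral_uIoc]
  rw [MeasureTheory.integral_smul, MeasureTheory.integral_smul,
    MeasureTheory.integral_integral_swap hint, smul_comm]

/-- FTC with two moving endpoints for a continuous integrand. -/
lemma oir_deriv_aux (F : ℝ → ℝ) (hF : Continuous F) {c d : ℝ → ℝ} {c' d' x : ℝ}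
    (hc : HasDerivAt c c' x) (hd : HasDerivAt d d' x) :
    HasDerivAt (fun y => ∫ u in c y..d y, F u) (F (d x) * d' - F (c x) * c') x := by
  have hG : ∀ y : ℝ, HasDerivAt (fun z => ∫ u in (0:ℝ)..z, F u) (F y) y := fun y =>
    intervalIntegral.integral_hasDerivAt_right (hF.intervalIntegrable _ _)
      (hF.stronglyMeasurable.stronglyMeasurableAtFilter) hF.continuousAt
  have heq : (fun y => ∫ u in c y..d y, F u)
      = fun y => (∫ u in (0:ℝ)..d y, F u) - ∫ u in (0:ℝ)..c y, F u := by
    funext y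
    rw [intervalIntegral.integral_interval_sub_left (hF.intervalIntegrable _ _)
      (hF.intervalIntegrable _ _)]
  rw [heq]
  exact ((hG (d x)).comp x hd).sub ((hG (c x)).comp x hc)

/-- 2D black-box OIR loss, partial derivative with respect to `a₁`. -/
theorem oir_black_box_2d_partial_a1
    (f : ℝ → ℝ → ℝ) (hf : Continuous fun p : ℝ × ℝ => f p.1 p.2)
    (α a₁ a₂ b₁ b₂ : ℝ) (hα : 0 < α) (h1 : a₁ < b₁) (h2 : a₂ < b₂) :
    HasDerivAt
      (fun x => (∫ v in (a₂ - α * (b₂ - a₂) / 2)..(b₂ + α * (b₂ - a₂) / 2),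
          ∫ u in (x - α * (b₁ - x) / 2)..(b₁ + α * (b₁ - x) / 2), f u v)
        - 2 * ∫ v in a₂..b₂, ∫ u in x..b₁, f u v)
      (-(1 + α / 2) * (∫ v in (a₂ - α * (b₂ - a₂) / 2)..(b₂ + α * (b₂ - a₂) / 2),
          f (a₁ - α * (b₁ - a₁) / 2) v)
        - α / 2 * (∫ v in (a₂ - α * (b₂ - a₂) / 2)..(b₂ + α * (b₂ - a₂) / 2),
          f (b₁ + α * (b₁ - a₁) / 2) v)
        + 2 * ∫ v in a₂..b₂, f a₁ v) a₁ := by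
  set A₂ := a₂ - α * (b₂ - a₂) / 2 with hA₂
  set B₂ := b₂ + α * (b₂ - a₂) / 2 with hB₂
  have hF₁ : Continuous fun u => ∫ v in A₂..B₂, f u v :=
    continuous_parametric_intervalIntegral_of_continuous' hf A₂ B₂
  have hF₂ : Continuous fun u => ∫ v in a₂..b₂, f u v :=
    continuous_parametric_intervalIntegral_of_continuous' hf a₂ b₂
  have key : (fun x => (∫ v in A₂..B₂,
          ∫ u in (x - α * (b₁ - x) / 2)..(b₁ + α * (b₁ - x) / 2), f u v)
        - 2 * ∫ v in a₂..b₂, ∫ u in x..b₁, f u v)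
      = fun x => (∫ u in (x - α * (b₁ - x) / 2)..(b₁ + α * (b₁ - x) / 2),
          ∫ v in A₂..B₂, f u v)
        - 2 * ∫ u in x..b₁, ∫ v in a₂..b₂, f u v := by
    funext x
    rw [oir_swap_aux f hf, oir_swap_aux f hf]
  rw [key]
  have hc : HasDerivAt (fun x : ℝ => x - α * (b₁ - x) / 2) (1 + α / 2) a₁ := by
    have h := (hasDerivAt_id a₁).sub
      ((((hasDerivAt_id a₁).const_sub b₁).const_mul α).div_const 2)
    exact h.congr_deriv (by ring)
  have hd : HasDerivAt (fun x : ℝ => b₁ + α * (b₁ - x) / 2) (-(α / 2)) a₁ := by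
    have h := (hasDerivAt_const a₁ b₁).add
      ((((hasDerivAt_id a₁).const_sub b₁).const_mul α).div_const 2)
    exact h.congr_deriv (by ring)
  have h1' := oir_deriv_aux _ hF₁ hc hd
  have h2' := oir_deriv_aux _ hF₂ (hasDerivAt_id a₁) (hasDerivAt_const a₁ b₁)
  have h3 := h1'.sub (h2'.const_mul 2)
  exact h3.congr_deriv (by simp only [id_eq]; ring)
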